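/- Let G be the group with presentation ⟨x, y, z | [z,[x,y]] = 1⟩, B the free group on x, y, and φ: G → B the homomorphism sending x ↦ x, y ↦ y, z ↦ 1. Then the class of [x,y] in G^{(1)}/[G^{(1)},G^{(1)}] is Z[G/G^{(1)}]-torsion (so [x,y] ∈ G^{(2)}_H), but φ([x,y]) = [x,y] is not in B^{(2)} = [[B,B],[B,B]]. Hence the torsion-free derived series is not fully invariant: φ(G^{(2)}_H) is not contained in B^{(2)}_H. -/

import Mathlib

open scoped Classical
open scoped commutatorElement

/-- The coefficient, at the coset `g N`, of the element of `ℤ[G/N]` represented by the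
formal sum `∑ kᵢ·ηᵢ` encoded by the list `l` of pairs `(kᵢ, ηᵢ)`. -/
noncomputable def cosetCoeff {G : Type} [Group G] (N : Subgroup G)
    (l : List (ℤ × G)) (g : G) : ℤ :=
  (l.map fun p => if p.2⁻¹ * g ∈ N then p.1 else 0).sum

/-- The list `l` of pairs `(kᵢ, ηᵢ)` represents a nonzero element of `ℤ[G/N]`. -/
def NonzeroMod {G : Type} [Group G] (N : Subgroup G) (l : List (ℤ × G)) : Prop :=
  ∃ g : G, cosetCoeff N l g ≠ 0

/-- The result of acting on the class of `x` in `N/[N,N]` by the element of `ℤ[G/N]`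
represented by `l = [(k₁,η₁),…]`, computed in `G`:  `∏ ηᵢ⁻¹ x^{kᵢ} ηᵢ`. -/
def actList {G : Type} [Group G] (x : G) (l : List (ℤ × G)) : G :=
  (l.map fun p => p.2⁻¹ * x ^ p.1 * p.2).prod

/-- One step of the torsion-free derived series: the preimage in `N` of the
`ℤ[G/N]`-torsion submodule of `N/[N,N]` (wrapped with `Subgroup.closure`; since
`ℤ[G/N]` is an Ore domain the underlying set is already a subgroup). -/
def tfStep {G : Type} [Group G] (N : Subgroup G) : Subgroup G :=
  Subgroup.closure
    { x | x ∈ N ∧ ∃ l : List (ℤ × G), NonzeroMod N l ∧ actList x l ∈ ⁅N, N⁆ }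

/-- Harvey's torsion-free derived series `G⁽ⁿ⁾_H`. -/
def tfH (G : Type) [Group G] : ℕ → Subgroup G
  | 0 => ⊤
  | n + 1 => tfStep (tfH G n)

section Generic
variable {G : Type} [Group G] {H : Type} [CommGroup H]

theorem actList_cons (x : G) (p : ℤ × G) (l : List (ℤ × G)) :
    actList x (p :: l) = (p.2⁻¹ * x ^ p.1 * p.2) * actList x l := by
  simp [actList]

theorem map_actList (π : G →* H) (x : G) (l : List (ℤ × G)) :
    π (actList x l) = π x ^ ((l.map Prod.fst).sum) := by
  induction l with
  | nil => simp [actList]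
  | cons p l ih =>
      rw [actList_cons, map_mul, ih]
      simp only [map_mul, map_inv, map_zpow]
      rw [mul_comm (π p.2)⁻¹ (π x ^ p.1), mul_assoc, mul_assoc, inv_mul_cancel_left, ← zpow_add,
        List.map_cons, List.sum_cons]

theorem cosetCoeff_top (l : List (ℤ × G)) (g : G) :
    cosetCoeff (⊤ : Subgroup G) l g = (l.map Prod.fst).sum := by
  simp [cosetCoeff]

theorem commutator_le_tfStep (N : Subgroup G) : ⁅N, N⁆ ≤ tfStep N := by
  intro x hx
  apply Subgroup.subset_closure
  refine ⟨Subgroup.commutator_le.mpr (fun g₁ h₁ g₂ h₂ => ?_) hx, [(1, 1)], ⟨1, ?_⟩, ?_⟩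
  · exact Subgroup.mul_mem _ (Subgroup.mul_mem _ (Subgroup.mul_mem _ h₁ h₂)
      (Subgroup.inv_mem _ h₁)) (Subgroup.inv_mem _ h₂)
  · simp [cosetCoeff, Subgroup.one_mem]
  · simpa [actList] using hx

theorem tfStep_top_le_ker (π : G →* H)
    (htf : ∀ (h : H) (k : ℤ), k ≠ 0 → h ^ k = 1 → h = 1) :
    tfStep (⊤ : Subgroup G) ≤ π.ker := by
  rw [tfStep, Subgroup.closure_le]
  rintro x ⟨-, l, ⟨g, hg⟩, hact⟩
  have h1 : π (actList x l) = 1 := by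
    have : ⁅(⊤ : Subgroup G), ⊤⁆ ≤ π.ker := by
      rw [← commutator_def]; exact Abelianization.commutator_subset_ker π
    exact this hact
  rw [map_actList] at h1
  rw [cosetCoeff_top] at hg
  exact htf _ _ hg h1

end Generic


abbrev Bf : Type := FreeGroup (Fin 2)
abbrev Aab : Type := Multiplicative (Fin 2 →₀ ℤ)
abbrev Rng : Type := AddMonoidAlgebra ℤ (Fin 2 →₀ ℤ)

noncomputable def abm : Bf →* Aab :=
  FreeGroup.lift fun i => Multiplicative.ofAdd (Finsupp.single i 1)

noncomputable def mono : Aab →* Rngˣ where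
  toFun a := ⟨AddMonoidAlgebra.single a.toAdd 1, AddMonoidAlgebra.single (-a.toAdd) 1,
    by rw [AddMonoidAlgebra.single_mul_single]; simp [AddMonoidAlgebra.one_def],
    by rw [AddMonoidAlgebra.single_mul_single]; simp [AddMonoidAlgebra.one_def]⟩
  map_one' := by
    apply Units.ext
    simp [AddMonoidAlgebra.one_def]
  map_mul' a b := by
    apply Units.ext
    show AddMonoidAlgebra.single (a * b).toAdd (1:ℤ) =
      AddMonoidAlgebra.single a.toAdd 1 * AddMonoidAlgebra.single b.toAdd 1
    rw [AddMonoidAlgebra.single_mul_single]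
    norm_num

@[simp] theorem mono_val (a : Aab) : ((mono a : Rngˣ) : Rng) = AddMonoidAlgebra.single a.toAdd 1 := rfl
@[simp] theorem mono_inv_val (a : Aab) : (((mono a)⁻¹ : Rngˣ) : Rng) = AddMonoidAlgebra.single (-a.toAdd) 1 := rfl

noncomputable def phiAut (a : Aab) : MulAut (Multiplicative Rng) where
  toFun r := Multiplicative.ofAdd (((mono a : Rngˣ) : Rng) * r.toAdd)
  invFun r := Multiplicative.ofAdd ((((mono a)⁻¹ : Rngˣ) : Rng) * r.toAdd)
  left_inv r := by
    simp only [toAdd_ofAdd, ← mul_assoc, Units.inv_mul, one_mul,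
      ofAdd_toAdd]
  right_inv r := by
    simp only [toAdd_ofAdd, ← mul_assoc, Units.mul_inv, one_mul,
      ofAdd_toAdd]
  map_mul' r s := by
    show Multiplicative.ofAdd (_ * (r.toAdd + s.toAdd)) = _
    rw [mul_add]
    rfl

noncomputable def phiM : Aab →* MulAut (Multiplicative Rng) where
  toFun := phiAut
  map_one' := by
    apply MulEquiv.ext
    intro r
    show Multiplicative.ofAdd (((mono 1 : Rngˣ) : Rng) * r.toAdd) = r
    rw [map_one]
    simp
  map_mul' a b := by
    apply MulEquiv.ext
    intro r
    show Multiplicative.ofAdd (((mono (a * b) : Rngˣ) : Rng) * r.toAdd) =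
      Multiplicative.ofAdd (((mono a : Rngˣ) : Rng) *
        (Multiplicative.ofAdd (((mono b : Rngˣ) : Rng) * r.toAdd)).toAdd)
    rw [map_mul mono a b, Units.val_mul, toAdd_ofAdd, mul_assoc]

@[simp] theorem phiM_apply (a : Aab) (r : Multiplicative Rng) :
    phiM a r = Multiplicative.ofAdd (((mono a : Rngˣ) : Rng) * r.toAdd) := rfl

abbrev MM : Type := SemidirectProduct (Multiplicative Rng) Aab phiM

noncomputable def psiM : Bf →* MM :=
  FreeGroup.lift fun i =>
    ⟨Multiplicative.ofAdd (if i = 0 then (1 : Rng) else 0), Multiplicative.ofAdd (Finsupp.single i 1)⟩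

@[simp] theorem abm_of (i : Fin 2) :
    abm (FreeGroup.of i) = Multiplicative.ofAdd (Finsupp.single i 1) := by simp [abm]

theorem psiM_right (w : Bf) : (psiM w).right = abm w := by
  have h : SemidirectProduct.rightHom.comp psiM = abm := by
    apply FreeGroup.ext_hom
    intro i
    simp [psiM, abm]
  have := DFunLike.congr_fun h w
  simpa using this

noncomputable def Dm (w : Bf) : Rng := ((psiM w).left).toAdd

theorem Dm_mul (v w : Bf) : Dm (v * w) = Dm v + ((mono (abm v) : Rngˣ) : Rng) * Dm w := by
  show ((psiM (v * w)).left).toAdd = _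
  rw [map_mul, SemidirectProduct.mul_left, psiM_right]
  rfl

@[simp] theorem Dm_one : Dm 1 = 0 := by simp [Dm]

theorem Dm_inv (w : Bf) : Dm w⁻¹ = -((((mono (abm w))⁻¹ : Rngˣ) : Rng) * Dm w) := by
  have h0 : Dm (w * w⁻¹) = 0 := by simp
  rw [Dm_mul] at h0
  have h1 := congrArg (fun r => (((mono (abm w))⁻¹ : Rngˣ) : Rng) * r) h0
  simp only [mul_add, mul_zero] at h1
  rw [← mul_assoc] at h1
  rw [Units.inv_mul, one_mul] at h1
  linear_combination h1


theorem aab_torsionfree : ∀ (h : Aab) (k : ℤ), k ≠ 0 → h ^ k = 1 → h = 1 := by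
  intro h k hk h1
  have hsm : k • h.toAdd = 0 := by
    have := congrArg Multiplicative.toAdd h1
    simpa using this
  have h2 : h.toAdd = 0 := by
    ext a
    have := congrArg (fun v => v a) hsm
    simp only [Finsupp.smul_apply, smul_eq_mul, Finsupp.coe_zero, Pi.zero_apply] at this
    rcases mul_eq_zero.mp this with h | h
    · exact absurd h hk
    · exact h
  have : h = Multiplicative.ofAdd 0 := by
    rw [← h2]; rfl
  simpa using this

theorem ker_abm_le_commutator : abm.ker ≤ commutator Bf := by
  intro w hw
  have hw1 : abm w = 1 := hw
  set γ : Aab →* Abelianization Bf :=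
    AddMonoidHom.toMultiplicativeLeft
      (Finsupp.liftAddHom fun i =>
        zmultiplesHom (Additive (Abelianization Bf))
          (Additive.ofMul (Abelianization.of (FreeGroup.of i)))) with hγ
  have key : γ.comp abm = Abelianization.of := by
    apply FreeGroup.ext_hom
    intro i
    simp [hγ, abm, AddMonoidHom.toMultiplicativeLeft]
  have : Abelianization.of w = 1 := by
    rw [← key]
    simp [hw1]
  exact (QuotientGroup.eq_one_iff w).mp this

@[simp] theorem Dm_of0 : Dm (FreeGroup.of (0 : Fin 2)) = 1 := by simp [Dm, psiM]
@[simp] theorem Dm_of1 : Dm (FreeGroup.of (1 : Fin 2)) = 0 := by simp [Dm, psiM]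

theorem abm_actList_one {x : Bf} (hx : abm x = 1) (l : List (ℤ × Bf)) :
    abm (actList x l) = 1 := by
  rw [map_actList, hx, one_zpow]

theorem Dm_mul' {v : Bf} (hv : abm v = 1) (w : Bf) : Dm (v * w) = Dm v + Dm w := by
  rw [Dm_mul, hv]
  simp [← AddMonoidAlgebra.one_def]

theorem Dm_inv' {w : Bf} (hw : abm w = 1) : Dm w⁻¹ = -Dm w := by
  rw [Dm_inv, hw]
  simp [← AddMonoidAlgebra.one_def]

theorem Dm_conj {w : Bf} (hw : abm w = 1) (g : Bf) :
    Dm (g * w * g⁻¹) = ((mono (abm g) : Rngˣ) : Rng) * Dm w := by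
  rw [Dm_mul, Dm_mul, Dm_inv, map_mul abm g w, hw, mul_one]
  have h : ((mono (abm g) : Rngˣ) : Rng) * (((mono (abm g))⁻¹ : Rngˣ) : Rng) = 1 :=
    Units.mul_inv _
  linear_combination (-(Dm g)) * h

theorem Dm_conj' {w : Bf} (hw : abm w = 1) (g : Bf) :
    Dm (g⁻¹ * w * g) = (((mono (abm g))⁻¹ : Rngˣ) : Rng) * Dm w := by
  have h := Dm_conj hw g⁻¹
  rw [inv_inv] at h
  rw [h, map_inv]
  rfl

theorem Dm_zpow {w : Bf} (hw : abm w = 1) (k : ℤ) : Dm (w ^ k) = k • Dm w := by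
  have hn : ∀ n : ℕ, Dm (w ^ n) = n • Dm w := by
    intro n
    induction n with
    | zero => simp
    | succ n ih =>
        rw [pow_succ', Dm_mul' hw, ih, succ_nsmul]
        ring
  rcases k with n | n
  · simpa using hn n
  · have h1 : abm (w ^ (n+1 : ℕ)) = 1 := by rw [map_pow, hw, one_pow]
    rw [zpow_negSucc, Dm_inv' h1, hn]
    rw [Int.negSucc_eq, neg_zsmul, neg_inj, ← natCast_zsmul]
    push_cast
    ring_nf
section NCl
variable {H : Type*} [Group H]

theorem mul_comm_of_closure {s : Set H} (hgen : Subgroup.closure s = ⊤)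
    (hc : ∀ a ∈ s, ∀ b ∈ s, Commute a b) (g₁ g₂ : H) : Commute g₁ g₂ := by
  have mem : ∀ g : H, g ∈ Subgroup.closure s := fun g => hgen ▸ Subgroup.mem_top g
  refine Subgroup.closure_induction (p := fun g _ => Commute g g₂) ?_ (Commute.one_left _)
    (fun x y _ _ hx hy => hx.mul_left hy) (fun x _ hx => hx.inv_left) (mem g₁)
  intro a ha
  refine Subgroup.closure_induction (p := fun g _ => Commute a g) (fun b hb => hc a ha b hb)
    (Commute.one_right _) (fun x y _ _ hx hy => hx.mul_right hy)
    (fun x _ hx => hx.inv_right) (mem g₂)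

end NCl

def cWord : Bf := ⁅FreeGroup.of (0 : Fin 2), FreeGroup.of (1 : Fin 2)⁆

theorem commutator_eq_ncl : commutator Bf = Subgroup.normalClosure {cWord} := by
  apply le_antisymm
  · rw [commutator_def, Subgroup.commutator_le]
    intro g₁ _ g₂ _
    rw [← QuotientGroup.eq_one_iff]
    show (QuotientGroup.mk' (Subgroup.normalClosure {cWord})) ⁅g₁, g₂⁆ = 1
    rw [map_commutatorElement (QuotientGroup.mk' _) g₁ g₂, commutatorElement_eq_one_iff_mul_comm]
    have hgen : Subgroup.closure
        (Set.range fun i : Fin 2 => ((FreeGroup.of i : Bf) : Bf ⧸ Subgroup.normalClosure {cWord})) = ⊤ := by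
      have h1 : (Set.range fun i : Fin 2 => ((FreeGroup.of i : Bf) : Bf ⧸ Subgroup.normalClosure {cWord}))
          = (QuotientGroup.mk' (Subgroup.normalClosure {cWord})) '' (Set.range (FreeGroup.of : Fin 2 → Bf)) := by
        rw [← Set.range_comp]; rfl
      rw [h1, ← MonoidHom.map_closure, FreeGroup.closure_range_of, ← MonoidHom.range_eq_map,
        MonoidHom.range_eq_top]
      exact QuotientGroup.mk'_surjective _
    have hxy : Commute ((FreeGroup.of (0:Fin 2) : Bf) : Bf ⧸ Subgroup.normalClosure {cWord})
        ((FreeGroup.of (1:Fin 2) : Bf) : Bf ⧸ Subgroup.normalClosure {cWord}) := by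
      have h1 : ((cWord : Bf) : Bf ⧸ Subgroup.normalClosure {cWord}) = 1 :=
        (QuotientGroup.eq_one_iff _).mpr
          (Subgroup.subset_normalClosure (Set.mem_singleton _))
      rw [Commute, SemiconjBy]
      rw [← commutatorElement_eq_one_iff_mul_comm, commutatorElement_def]
      rw [show ((cWord : Bf) : Bf ⧸ Subgroup.normalClosure {cWord}) = ((FreeGroup.of 0 * FreeGroup.of 1 *
        (FreeGroup.of 0)⁻¹ * (FreeGroup.of 1)⁻¹ : Bf) : Bf ⧸ Subgroup.normalClosure {cWord}) from rfl] at h1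
      simpa using h1
    refine mul_comm_of_closure hgen ?_ _ _
    rintro a ⟨i, rfl⟩ b ⟨j, rfl⟩
    fin_cases i <;> fin_cases j
    · exact Commute.refl _
    · exact hxy
    · exact hxy.symm
    · exact Commute.refl _
  · exact Subgroup.normalClosure_le_normal (by
      intro x hx
      rw [Set.mem_singleton_iff] at hx
      subst hx
      rw [SetLike.mem_coe, commutator_def]
      exact Subgroup.commutator_mem_commutator (Subgroup.mem_top _) (Subgroup.mem_top _))
def FP : Subgroup Bf := commutator Bf

theorem cWord_mem_FP : cWord ∈ FP := by
  rw [FP, commutator_def]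
  exact Subgroup.commutator_mem_commutator (Subgroup.mem_top _) (Subgroup.mem_top _)

instance FP_normal : FP.Normal := by
  rw [FP]; infer_instance

def D2s : Subgroup Bf := ⁅FP, FP⁆

instance D2s_normal : D2s.Normal := Subgroup.commutator_normal FP FP

abbrev QB : Type := Bf ⧸ D2s

noncomputable def mkq : Bf →* QB := QuotientGroup.mk' D2s

noncomputable def CC : Subgroup QB := FP.map mkq

noncomputable instance : CommGroup CC :=
  { (inferInstance : Group CC) with
    mul_comm := by
      rintro ⟨q₁, hq₁⟩ ⟨q₂, hq₂⟩
      obtain ⟨a, ha, rfl⟩ := hq₁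
      obtain ⟨b, hb, rfl⟩ := hq₂
      apply Subtype.ext
      show mkq a * mkq b = mkq b * mkq a
      have h1 : mkq ⁅a, b⁆ = 1 :=
        (QuotientGroup.eq_one_iff _).mpr (Subgroup.commutator_mem_commutator ha hb)
      rw [map_commutatorElement] at h1
      exact commutatorElement_eq_one_iff_mul_comm.mp h1 }

noncomputable def wrep (a : Fin 2 →₀ ℤ) : Bf :=
  FreeGroup.of 0 ^ (a 0) * FreeGroup.of 1 ^ (a 1)

theorem abm_wrep (a : Fin 2 →₀ ℤ) : abm (wrep a) = Multiplicative.ofAdd a := by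
  rw [wrep, map_mul, map_zpow, map_zpow, abm_of, abm_of]
  have h0 : ∀ (i : Fin 2) (k : ℤ),
      (Multiplicative.ofAdd (Finsupp.single i 1)) ^ k
        = Multiplicative.ofAdd (Finsupp.single i k : Fin 2 →₀ ℤ) := by
    intro i k
    apply Multiplicative.toAdd.injective
    simp [toAdd_zpow]
  rw [h0, h0]
  apply Multiplicative.toAdd.injective
  simp only [toAdd_mul, toAdd_ofAdd]
  ext i
  fin_cases i <;> simp [Finsupp.single_apply]

theorem cWord_conj_mem (g : Bf) : g * cWord * g⁻¹ ∈ FP :=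
  FP_normal.conj_mem _ cWord_mem_FP g

noncomputable def cElt (a : Fin 2 →₀ ℤ) : CC :=
  ⟨mkq (wrep a * cWord * (wrep a)⁻¹), Subgroup.mem_map_of_mem mkq (cWord_conj_mem (wrep a))⟩

noncomputable def Theta : Rng →+ Additive CC :=
  (Finsupp.liftAddHom fun a => (zmultiplesHom (Additive CC)) (Additive.ofMul (cElt a))).comp
    AddMonoidAlgebra.coeffAddEquiv.toAddMonoidHom

theorem Theta_single (a : Fin 2 →₀ ℤ) (k : ℤ) :
    Theta (AddMonoidAlgebra.single a k) = k • Additive.ofMul (cElt a) := by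
  rw [Theta, AddMonoidHom.comp_apply]
  exact Finsupp.liftAddHom_apply_single _ a k

theorem congr_base (g : Bf) :
    mkq (g * cWord * g⁻¹) = ((cElt ((abm g).toAdd) : CC) : QB) := by
  set a := (abm g).toAdd with ha
  set h := g * (wrep a)⁻¹ with hh
  have habh : abm h = 1 := by
    rw [hh, map_mul, map_inv, abm_wrep, ha, ofAdd_toAdd, mul_inv_cancel]
  have hmem : h ∈ FP := by
    rw [FP]
    exact ker_abm_le_commutator habh
  have hu : wrep a * cWord * (wrep a)⁻¹ ∈ FP := cWord_conj_mem (wrep a)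
  have key : g * cWord * g⁻¹ = h * (wrep a * cWord * (wrep a)⁻¹) * h⁻¹ := by
    rw [hh]; group
  have hcomm : mkq (h * (wrep a * cWord * (wrep a)⁻¹) * h⁻¹) =
      mkq (wrep a * cWord * (wrep a)⁻¹) := by
    have e1 : h * (wrep a * cWord * (wrep a)⁻¹) * h⁻¹ =
        ⁅h, wrep a * cWord * (wrep a)⁻¹⁆ * (wrep a * cWord * (wrep a)⁻¹) := by
      rw [commutatorElement_def]; group
    have h9 : mkq ⁅h, wrep a * cWord * (wrep a)⁻¹⁆ = 1 :=
      (QuotientGroup.eq_one_iff _).mpr (Subgroup.commutator_mem_commutator hmem hu)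
    rw [e1, map_mul, h9, one_mul]
  rw [key, hcomm, cElt]

theorem abm_cWord : abm cWord = 1 := Abelianization.commutator_subset_ker abm cWord_mem_FP

noncomputable def tmon : Rng := AddMonoidAlgebra.single (Finsupp.single 1 1) 1

theorem Dm_cWord : Dm cWord = 1 - tmon := by
  have h01 : Dm (FreeGroup.of (0:Fin 2) * FreeGroup.of 1) = 1 := by
    rw [Dm_mul, Dm_of0, Dm_of1, mul_zero, add_zero]
  have h0i : Dm ((FreeGroup.of (0:Fin 2))⁻¹)
      = -(AddMonoidAlgebra.single (-(Finsupp.single 0 1)) 1) := by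
    rw [Dm_inv, Dm_of0, mul_one, mono_inv_val, abm_of, toAdd_ofAdd]
  have h1i : Dm ((FreeGroup.of (1:Fin 2))⁻¹) = 0 := by
    rw [Dm_inv, Dm_of1, mul_zero, neg_zero]
  have h2 : Dm (FreeGroup.of (0:Fin 2) * FreeGroup.of 1 * (FreeGroup.of 0)⁻¹) = 1 - tmon := by
    rw [Dm_mul, h01, h0i, mono_val, map_mul, abm_of, abm_of]
    rw [show (Multiplicative.ofAdd (Finsupp.single (0:Fin 2) (1:ℤ)) *
        Multiplicative.ofAdd (Finsupp.single (1:Fin 2) (1:ℤ))).toAdd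
        = Finsupp.single (0:Fin 2) (1:ℤ) + Finsupp.single (1:Fin 2) (1:ℤ) from rfl]
    rw [mul_neg, AddMonoidAlgebra.single_mul_single]
    have : Finsupp.single (0:Fin 2) (1:ℤ) + Finsupp.single 1 1 + -Finsupp.single 0 1
        = Finsupp.single 1 1 := by
      ext i; fin_cases i <;> simp [Finsupp.single_apply]
    rw [this]
    simp [tmon, sub_eq_add_neg]
  show Dm (FreeGroup.of 0 * FreeGroup.of 1 * (FreeGroup.of 0)⁻¹ * (FreeGroup.of 1)⁻¹) = 1 - tmon
  rw [Dm_mul, h2, h1i, mul_zero, add_zero]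

theorem tmon_ne : (1 : Rng) - tmon ≠ 0 := by
  intro h
  have hne : (Finsupp.single (1:Fin 2) (1:ℤ)) ≠ (0 : Fin 2 →₀ ℤ) := by
    intro hc
    have := congrArg (fun v => v (1:Fin 2)) hc
    simp [Finsupp.single_apply] at this
  have hval : ((1:Rng) - tmon).coeff 0 = 1 := by
    rw [AddMonoidAlgebra.coeff_sub, Finsupp.sub_apply, AddMonoidAlgebra.one_def, tmon,
      AddMonoidAlgebra.coeff_single, AddMonoidAlgebra.coeff_single, Finsupp.single_apply,
      Finsupp.single_apply, if_pos rfl, if_neg hne, sub_zero]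
  rw [h] at hval
  simp at hval

theorem ncl_le_ker_abm : ∀ v ∈ Subgroup.normalClosure {cWord}, abm v = 1 := by
  intro v hv
  rw [← commutator_eq_ncl] at hv
  exact Abelianization.commutator_subset_ker abm hv

theorem MagnusKey : ∀ w ∈ FP, ∃ r : Rng,
    mkq w = ((Additive.toMul (Theta r) : CC) : QB) ∧ Dm w = r * Dm cWord := by
  intro w hw
  rw [FP, commutator_eq_ncl] at hw
  rw [Subgroup.normalClosure] at hw
  refine Subgroup.closure_induction (p := fun v _ => ∃ r : Rng,
      mkq v = ((Additive.toMul (Theta r) : CC) : QB) ∧ Dm v = r * Dm cWord) ?_ ?_ ?_ ?_ hw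
  · intro c hc
    rw [Group.mem_conjugatesOfSet_iff] at hc
    obtain ⟨aa, haa, hconj⟩ := hc
    rw [Set.mem_singleton_iff] at haa
    subst haa
    obtain ⟨g, hg⟩ := isConj_iff.mp hconj
    refine ⟨AddMonoidAlgebra.single ((abm g).toAdd) 1, ?_, ?_⟩
    · rw [← hg, congr_base, Theta_single, one_zsmul]
      rfl
    · rw [← hg, Dm_conj abm_cWord, mono_val]
  · exact ⟨0, by simp, by rw [Dm_one, zero_mul]⟩
  · rintro x y hx hy ⟨r₁, e₁, d₁⟩ ⟨r₂, e₂, d₂⟩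
    have habx : abm x = 1 := ncl_le_ker_abm x hx
    refine ⟨r₁ + r₂, ?_, ?_⟩
    · rw [map_mul, e₁, e₂, map_add]
      rfl
    · rw [Dm_mul' habx, d₁, d₂, add_mul]
  · rintro x hx ⟨r, e, d⟩
    have habx : abm x = 1 := ncl_le_ker_abm x hx
    refine ⟨-r, ?_, ?_⟩
    · rw [map_inv, e, map_neg]
      rfl
    · rw [Dm_inv' habx, d, neg_mul]

theorem DmZero : ∀ w ∈ FP, Dm w = 0 → w ∈ D2s := by
  intro w hw hD
  obtain ⟨r, e, d⟩ := MagnusKey w hw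
  rw [hD, Dm_cWord] at d
  have hr : r = 0 := by
    rcases mul_eq_zero.mp d.symm with h | h
    · exact h
    · exact absurd h tmon_ne
  rw [hr] at e
  have : mkq w = 1 := by
    rw [e, map_zero]
    rfl
  exact (QuotientGroup.eq_one_iff _).mp this

theorem mem_FP_iff (w : Bf) : w ∈ FP ↔ abm w = 1 :=
  ⟨fun h => Abelianization.commutator_subset_ker abm h, fun h => ker_abm_le_commutator h⟩

theorem tfH_B1 : tfH Bf 1 = FP := by
  apply le_antisymm
  · exact le_trans (tfStep_top_le_ker abm aab_torsionfree) ker_abm_le_commutator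
  · show FP ≤ tfStep ⊤
    rw [FP, commutator_def]
    exact commutator_le_tfStep ⊤

noncomputable def rL (l : List (ℤ × Bf)) : Rng :=
  (l.map fun p => AddMonoidAlgebra.single (-(abm p.2).toAdd) p.1).sum

theorem rL_apply (l : List (ℤ × Bf)) (g : Bf) :
    (rL l).coeff (-(abm g).toAdd) = cosetCoeff FP l g := by
  induction l with
  | nil => simp [rL, cosetCoeff]
  | cons p l ih =>
      rw [rL, List.map_cons, List.sum_cons, cosetCoeff, List.map_cons, List.sum_cons]
      rw [show ((List.map (fun p => AddMonoidAlgebra.single (-(abm p.2).toAdd) p.1) l).sum : Rng)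
        = rL l from rfl]
      rw [AddMonoidAlgebra.coeff_add, Finsupp.add_apply, ih]
      congr 1
      have hiff : (-(abm p.2).toAdd = -(abm g).toAdd) ↔ (p.2⁻¹ * g ∈ FP) := by
        rw [neg_inj, mem_FP_iff, map_mul, map_inv, inv_mul_eq_one]
        exact ⟨fun h => Multiplicative.toAdd.injective h, fun h => by rw [h]⟩
      rw [AddMonoidAlgebra.coeff_single, Finsupp.single_apply]
      simp only [hiff]

theorem rL_ne_zero {l : List (ℤ × Bf)} (h : NonzeroMod FP l) : rL l ≠ 0 := by
  obtain ⟨g, hg⟩ := h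
  intro h0
  apply hg
  rw [← rL_apply, h0]
  simp

theorem Dm_actList {x : Bf} (hx : abm x = 1) (l : List (ℤ × Bf)) :
    Dm (actList x l) = rL l * Dm x := by
  induction l with
  | nil => simp [actList, rL]
  | cons p l ih =>
      have hxp : abm (x ^ p.1) = 1 := by rw [map_zpow, hx, one_zpow]
      have hfac : abm (p.2⁻¹ * x ^ p.1 * p.2) = 1 := by
        rw [map_mul, map_mul, map_inv, hxp, mul_one, inv_mul_cancel]
      rw [actList_cons, Dm_mul' hfac, ih]
      have h1 : Dm (p.2⁻¹ * x ^ p.1 * p.2)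
          = AddMonoidAlgebra.single (-(abm p.2).toAdd) p.1 * Dm x := by
        rw [show p.2⁻¹ * x ^ p.1 * p.2 = p.2⁻¹ * (x ^ p.1) * p.2 from rfl,
          Dm_conj' hxp, Dm_zpow hx, mono_inv_val]
        rw [mul_smul_comm, ← smul_mul_assoc, AddMonoidAlgebra.smul_single, smul_eq_mul, mul_one]
      simp only [h1, rL, List.map_cons, List.sum_cons, add_mul]

theorem D2s_le_ker : D2s ≤ psiM.ker := by
  rw [D2s, Subgroup.commutator_le]
  intro g₁ h₁ g₂ h₂
  rw [MonoidHom.mem_ker, map_commutatorElement, commutatorElement_eq_one_iff_mul_comm]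
  have r₁ : (psiM g₁).right = 1 := by rw [psiM_right]; exact (mem_FP_iff _).mp h₁
  have r₂ : (psiM g₂).right = 1 := by rw [psiM_right]; exact (mem_FP_iff _).mp h₂
  apply SemidirectProduct.ext
  · rw [SemidirectProduct.mul_left, SemidirectProduct.mul_left, r₁, r₂, map_one]
    exact mul_comm _ _
  · rw [SemidirectProduct.mul_right, SemidirectProduct.mul_right, r₁, r₂]

theorem Dm_eq_zero_of_mem_D2s {w : Bf} (h : w ∈ D2s) : Dm w = 0 := by
  have : psiM w = 1 := D2s_le_ker h
  rw [Dm, this]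
  rfl

theorem tfH_B2 : tfH Bf 2 = D2s := by
  have h1 : tfH Bf 2 = tfStep FP := by
    show tfStep (tfH Bf 1) = tfStep FP
    rw [tfH_B1]
  rw [h1]
  apply le_antisymm
  · rw [tfStep, Subgroup.closure_le]
    rintro x ⟨hxF, l, hnz, hact⟩
    have hDact : Dm (actList x l) = 0 := Dm_eq_zero_of_mem_D2s (by
      show actList x l ∈ D2s
      rw [D2s]
      exact hact)
    rw [Dm_actList ((mem_FP_iff x).mp hxF)] at hDact
    have hx0 : Dm x = 0 := by
      rcases mul_eq_zero.mp hDact with h | h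
      · exact absurd h (rL_ne_zero hnz)
      · exact h
    exact DmZero x hxF hx0
  · rw [D2s]
    exact commutator_le_tfStep FP

theorem conj4 : tfH Bf 2 = derivedSeries Bf 2 := by
  rw [tfH_B2, D2s, FP, derivedSeries_succ, derivedSeries_one]

theorem conj5 : cWord ∉ tfH Bf 2 := by
  rw [tfH_B2]
  intro h
  have := Dm_eq_zero_of_mem_D2s h
  rw [Dm_cWord] at this
  exact tmon_ne this

def relSet : Set (FreeGroup (Fin 3)) :=
  {⁅FreeGroup.of (2 : Fin 3), ⁅FreeGroup.of (0 : Fin 3), FreeGroup.of (1 : Fin 3)⁆⁆}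

abbrev Gp : Type := PresentedGroup relSet

theorem relG : ⁅(PresentedGroup.of (rels := relSet) 2),
    ⁅PresentedGroup.of (rels := relSet) 0, PresentedGroup.of (rels := relSet) 1⁆⁆ = 1 := by
  have h : (PresentedGroup.mk relSet
      ⁅FreeGroup.of (2 : Fin 3), ⁅FreeGroup.of (0 : Fin 3), FreeGroup.of (1 : Fin 3)⁆⁆) = 1 :=
    (QuotientGroup.eq_one_iff _).mpr (Subgroup.subset_normalClosure (Set.mem_singleton _))
  rw [map_commutatorElement, map_commutatorElement] at h
  exact h

theorem hcondG : ∀ r ∈ relSet,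
    (FreeGroup.lift fun i : Fin 3 => Multiplicative.ofAdd (if i = 2 then (1:ℤ) else 0)) r = 1 := by
  intro r hr
  rw [relSet, Set.mem_singleton_iff] at hr
  subst hr
  rw [map_commutatorElement, map_commutatorElement]
  exact commutatorElement_eq_one_iff_mul_comm.mpr (mul_comm _ _)

noncomputable def piG : Gp →* Multiplicative ℤ := PresentedGroup.toGroup hcondG

theorem piG_Z : piG (PresentedGroup.of 2) = Multiplicative.ofAdd 1 := by
  rw [piG, PresentedGroup.toGroup.of]
  norm_num

theorem mulint_torsionfree : ∀ (h : Multiplicative ℤ) (k : ℤ), k ≠ 0 → h ^ k = 1 → h = 1 := by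
  intro h k hk h1
  have : k • h.toAdd = 0 := by
    have := congrArg Multiplicative.toAdd h1
    simpa using this
  rw [smul_eq_mul] at this
  rcases mul_eq_zero.mp this with hc | hc
  · exact absurd hc hk
  · have : h = Multiplicative.ofAdd 0 := by rw [← hc]; rfl
    simpa using this

theorem tfH_G1_eq : tfH Gp 1 = tfStep ⊤ := rfl

theorem hZnotin : PresentedGroup.of (rels := relSet) 2 ∉ tfH Gp 1 := by
  intro h
  rw [tfH_G1_eq] at h
  have h1 : piG (PresentedGroup.of 2) = 1 := tfStep_top_le_ker piG mulint_torsionfree h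
  rw [piG_Z] at h1
  have := congrArg Multiplicative.toAdd h1
  simpa using this

theorem hXY_mem1 : ⁅PresentedGroup.of (rels := relSet) 0, PresentedGroup.of 1⁆ ∈ tfH Gp 1 := by
  rw [tfH_G1_eq]
  exact commutator_le_tfStep ⊤
    (Subgroup.commutator_mem_commutator (Subgroup.mem_top _) (Subgroup.mem_top _))

theorem conj2G : actList ⁅PresentedGroup.of (rels := relSet) 0, PresentedGroup.of 1⁆
    [((1 : ℤ), PresentedGroup.of 2), ((-1 : ℤ), (1 : Gp))] = 1 := by
  set Z : Gp := PresentedGroup.of 2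
  set C : Gp := ⁅PresentedGroup.of (rels := relSet) 0, PresentedGroup.of 1⁆ with hCdef
  have hcomm : Z * C = C * Z := commutatorElement_eq_one_iff_mul_comm.mp relG
  have hC : Z⁻¹ * C * Z = C := by
    rw [mul_assoc, ← hcomm, inv_mul_cancel_left]
  have he : actList C [((1 : ℤ), Z), ((-1 : ℤ), (1 : Gp))] = (Z⁻¹ * C * Z) * C⁻¹ := by
    simp [actList, mul_assoc]
  rw [he, hC, mul_inv_cancel]

theorem conj1G : ⁅PresentedGroup.of (rels := relSet) 0, PresentedGroup.of 1⁆ ∈ tfH Gp 2 := by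
  show _ ∈ tfStep (tfH Gp 1)
  apply Subgroup.subset_closure
  refine ⟨hXY_mem1, [((1 : ℤ), PresentedGroup.of 2), ((-1 : ℤ), (1 : Gp))], ⟨PresentedGroup.of 2, ?_⟩, ?_⟩
  · rw [cosetCoeff]
    simp only [List.map_cons, List.map_nil, List.sum_cons, List.sum_nil]
    rw [if_pos (by rw [inv_mul_cancel]; exact Subgroup.one_mem _),
      if_neg (by rw [inv_one, one_mul]; exact hZnotin)]
    norm_num
  · rw [conj2G]
    exact Subgroup.one_mem _

theorem conj2Gfull : actList ⁅PresentedGroup.of (rels := relSet) 0, PresentedGroup.of 1⁆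
    [((1 : ℤ), PresentedGroup.of 2), ((-1 : ℤ), (1 : Gp))] ∈ ⁅tfH Gp 1, tfH Gp 1⁆ := by
  rw [conj2G]
  exact Subgroup.one_mem _

/-- Let `G = ⟨x,y,z ∣ [z,[x,y]] = 1⟩`, let `B` be the free group on
two generators, and let `φ : G → B` send `x ↦ x`, `y ↦ y`, `z ↦ 1`.  Then `[x,y]`
lies in `G⁽²⁾_H` (its class in `G⁽¹⁾/[G⁽¹⁾,G⁽¹⁾]` is `ℤ[G/G⁽¹⁾]`-torsion, being
annihilated by `z - 1`), but `φ([x,y]) = [x,y]` does not lie in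
`B⁽²⁾_H = B⁽²⁾ = [[B,B],[B,B]]`.  Hence the torsion-free derived series is not fully
invariant: `φ(G⁽²⁾_H) ⊄ B⁽²⁾_H`. -/
theorem tfH_not_fully_invariant
    (rels : Set (FreeGroup (Fin 3)))
    (hrels : rels = {⁅FreeGroup.of (2 : Fin 3), ⁅FreeGroup.of (0 : Fin 3), FreeGroup.of (1 : Fin 3)⁆⁆})
    (φ : PresentedGroup rels →* FreeGroup (Fin 2))
    (hx : φ (PresentedGroup.of 0) = FreeGroup.of (0 : Fin 2))
    (hy : φ (PresentedGroup.of 1) = FreeGroup.of (1 : Fin 2))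
    (hz : φ (PresentedGroup.of 2) = 1) :
    ⁅PresentedGroup.of (rels := rels) 0, PresentedGroup.of 1⁆ ∈ tfH (PresentedGroup rels) 2 ∧
    actList ⁅PresentedGroup.of (rels := rels) 0, PresentedGroup.of 1⁆
        [((1 : ℤ), PresentedGroup.of 2), ((-1 : ℤ), (1 : PresentedGroup rels))] ∈
      ⁅tfH (PresentedGroup rels) 1, tfH (PresentedGroup rels) 1⁆ ∧
    φ ⁅PresentedGroup.of (rels := rels) 0, PresentedGroup.of 1⁆ =
      ⁅FreeGroup.of (0 : Fin 2), FreeGroup.of (1 : Fin 2)⁆ ∧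
    tfH (FreeGroup (Fin 2)) 2 = derivedSeries (FreeGroup (Fin 2)) 2 ∧
    φ ⁅PresentedGroup.of (rels := rels) 0, PresentedGroup.of 1⁆ ∉
      tfH (FreeGroup (Fin 2)) 2 := by
  subst hrels
  refine ⟨conj1G, conj2Gfull, ?_, conj4, ?_⟩
  · rw [map_commutatorElement, hx, hy]
  · rw [map_commutatorElement, hx, hy]
    exact conj5
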